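/- Let F̄ be the survival function defined by F̄(x) = 1 for x < 0 and F̄(x) = 1/(⌊x⌋ + 2) for x ≥ 0 (the shifted discrete Pareto distribution), and let θ ∈ (0,1). Then the inequality θ·F̄(x) ≤ F̄(x/θ) holds for all x ≥ 0 if and only if θ belongs to the set A = (0, 1/2] ∪ { (k+1)/(2k+1) : k ∈ ℕ, k ≥ 1 }. -/

import Mathlib

/-- Survival function of the shifted discrete Pareto distribution:
`F̄(x) = 1` for `x < 0` and `F̄(x) = 1/(⌊x⌋ + 2)` for `x ≥ 0`. -/
noncomputable def discreteParetoSurvival (x : ℝ) : ℝ :=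
  if x < 0 then 1 else 1 / ((⌊x⌋ : ℝ) + 2)

lemma key_iff (θ x : ℝ) (hθ : 0 < θ) (hx : 0 ≤ x) :
    θ * discreteParetoSurvival x ≤ discreteParetoSurvival (x / θ) ↔
      θ * ((⌊x / θ⌋ : ℝ) + 2) ≤ (⌊x⌋ : ℝ) + 2 := by
  have hx' : 0 ≤ x / θ := div_nonneg hx hθ.le
  have h1 : (0:ℝ) < (⌊x⌋ : ℝ) + 2 := by
    have h : (0:ℤ) ≤ ⌊x⌋ := Int.floor_nonneg.mpr hx
    have h' : (0:ℝ) ≤ (⌊x⌋:ℝ) := by exact_mod_cast h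
    linarith
  have h2 : (0:ℝ) < (⌊x/θ⌋ : ℝ) + 2 := by
    have h : (0:ℤ) ≤ ⌊x/θ⌋ := Int.floor_nonneg.mpr hx'
    have h' : (0:ℝ) ≤ (⌊x/θ⌋:ℝ) := by exact_mod_cast h
    linarith
  rw [discreteParetoSurvival, discreteParetoSurvival, if_neg (not_lt.2 hx),
    if_neg (not_lt.2 hx'), mul_one_div, div_le_div_iff₀ h1 h2, one_mul]

/-- the shifted discrete Pareto distribution is θ-subscalable if and
only if `θ ∈ (0, 1/2] ∪ {(k+1)/(2k+1) : k ∈ ℕ, k ≥ 1}`. -/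
theorem discretePareto_subscalable_iff (θ : ℝ) (hθ : θ ∈ Set.Ioo (0 : ℝ) 1) :
    (∀ x : ℝ, 0 ≤ x →
        θ * discreteParetoSurvival x ≤ discreteParetoSurvival (x / θ)) ↔
      (θ ≤ 1 / 2 ∨ ∃ k : ℕ, 1 ≤ k ∧ θ = ((k : ℝ) + 1) / (2 * (k : ℝ) + 1)) := by
  obtain ⟨hθ0, hθ1⟩ := hθ
  constructor
  · intro h
    by_contra hc
    push_neg at hc
    obtain ⟨h12, hk⟩ := hc
    have h2θ : 0 < 2*θ - 1 := by linarith
    set t : ℝ := θ / (2*θ - 1) with ht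
    have ht1 : 1 < t := by
      rw [ht, lt_div_iff₀ h2θ]; linarith
    set j : ℤ := ⌊t⌋ with hj
    have hjR : (1:ℝ) ≤ (j:ℝ) := by
      have : (1:ℤ) ≤ j := by
        rw [hj, Int.le_floor]; exact_mod_cast ht1.le
      exact_mod_cast this
    have hjt : (j:ℝ) ≤ t := Int.floor_le t
    have htj : t < (j:ℝ) + 1 := Int.lt_floor_add_one t
    -- strict upper bound: (2j-1)θ < j
    have hlt : (2*(j:ℝ)-1)*θ < j := by
      rcases lt_or_eq_of_le hjt with hlt' | heq
      · have h' : (j:ℝ) * (2*θ - 1) < θ := (lt_div_iff₀ h2θ).mp hlt'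
        nlinarith
      · exfalso
        have hje : θ = (j:ℝ) * (2*θ-1) := by
          have : t * (2*θ-1) = θ := by rw [ht, div_mul_cancel₀ _ h2θ.ne']
          rw [← heq] at this; linarith
        -- θ(2j-1) = j, so θ = j/(2j-1)
        have hj2 : (2:ℝ) ≤ (j:ℝ) := by
          by_contra hcon
          push_neg at hcon
          have : (j:ℝ) = 1 := by
            have : j = 1 := by
              have h1 : (1:ℤ) ≤ j := by exact_mod_cast hjR
              have h2' : (j:ℝ) < 2 := hcon
              have : j < 2 := by exact_mod_cast h2'
              omega
            exact_mod_cast this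
          rw [this] at hje
          nlinarith
        have hj1Z : (2:ℤ) ≤ j := by exact_mod_cast hj2
        refine hk (j-1).toNat ?_ ?_
        · omega
        · have hcast : (((j-1).toNat : ℝ)) = (j:ℝ) - 1 := by
            have : (((j-1).toNat : ℤ)) = j - 1 := Int.toNat_of_nonneg (by omega)
            exact_mod_cast this
          rw [hcast]
          have hden : (2*((j:ℝ)-1) + 1) = 2*(j:ℝ) - 1 := by ring
          rw [hden]
          have hpos : (0:ℝ) < 2*(j:ℝ) - 1 := by linarith
          rw [eq_div_iff hpos.ne']
          nlinarith [hje]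
    set x : ℝ := (2*(j:ℝ)-1)*θ with hxdef
    have hx0 : 0 ≤ x := by
      have : (0:ℝ) ≤ 2*(j:ℝ)-1 := by linarith
      positivity
    have hge : (j:ℝ) - 1 ≤ x := by nlinarith
    have hfx : ⌊x⌋ = j - 1 := by
      rw [Int.floor_eq_iff]
      constructor
      · push_cast; linarith
      · push_cast; linarith
    have hxθ : x / θ = 2*(j:ℝ) - 1 := by
      rw [hxdef, mul_div_cancel_right₀ _ hθ0.ne']
    have hfxθ : ⌊x/θ⌋ = 2*j - 1 := by
      rw [hxθ, show (2*(j:ℝ)-1) = ((2*j-1 : ℤ):ℝ) by push_cast; ring, Int.floor_intCast]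
    have hcond := h x hx0
    rw [key_iff θ x hθ0 hx0, hfx, hfxθ] at hcond
    push_cast at hcond
    -- hcond : θ * (2j - 1 + 2) ≤ (j - 1) + 2
    have hviol : (j:ℝ) + 1 < (2*(j:ℝ)+1)*θ := by
      have h' : θ < ((j:ℝ)+1) * (2*θ - 1) := (div_lt_iff₀ h2θ).mp htj
      nlinarith
    nlinarith
  · rintro (hhalf | ⟨k, hk1, hkθ⟩) x hx
    · rw [key_iff θ x hθ0 hx]
      have h1 : (⌊x/θ⌋:ℝ) ≤ x/θ := Int.floor_le _
      have h2 : x < (⌊x⌋:ℝ) + 1 := Int.lt_floor_add_one x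
      have h3 : θ * (⌊x/θ⌋:ℝ) ≤ x := by
        have := mul_le_mul_of_nonneg_left h1 hθ0.le
        rwa [mul_div_cancel₀ _ hθ0.ne'] at this
      nlinarith
    · rw [key_iff θ x hθ0 hx]
      have hkR : (1:ℝ) ≤ (k:ℝ) := by exact_mod_cast hk1
      have hk0 : (0:ℝ) < 2*(k:ℝ)+1 := by linarith
      have hθeq : θ * (2*(k:ℝ)+1) = (k:ℝ)+1 := by
        rw [hkθ]; field_simp
      have h1 : (⌊x/θ⌋:ℝ) ≤ x/θ := Int.floor_le _
      have h2 : x < (⌊x⌋:ℝ) + 1 := Int.lt_floor_add_one x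
      have hNx : (⌊x/θ⌋:ℝ) * θ ≤ x := by
        have := mul_le_mul_of_nonneg_right h1 hθ0.le
        rwa [div_mul_cancel₀ _ hθ0.ne'] at this
      have hNe : (⌊x/θ⌋:ℝ)*((k:ℝ)+1) = (⌊x/θ⌋:ℝ)*θ*(2*(k:ℝ)+1) := by
        rw [mul_assoc, hθeq]
      have hstep : (⌊x/θ⌋:ℝ)*((k:ℝ)+1) < ((⌊x⌋:ℝ)+1)*(2*(k:ℝ)+1) := by
        have ha := mul_le_mul_of_nonneg_right hNx hk0.le
        have hb := mul_lt_mul_of_pos_right h2 hk0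
        linarith
      have hint : ⌊x/θ⌋*((k:ℤ)+1) + 1 ≤ (⌊x⌋+1)*(2*(k:ℤ)+1) := by
        have h' : ⌊x/θ⌋*((k:ℤ)+1) < (⌊x⌋+1)*(2*(k:ℤ)+1) := by exact_mod_cast hstep
        omega
      have hintR : (⌊x/θ⌋:ℝ)*((k:ℝ)+1) + 1 ≤ ((⌊x⌋:ℝ)+1)*(2*(k:ℝ)+1) := by
        exact_mod_cast hint
      have hfin : θ*((⌊x/θ⌋:ℝ)+2)*(2*(k:ℝ)+1) ≤ ((⌊x⌋:ℝ)+2)*(2*(k:ℝ)+1) := by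
        have he : θ*((⌊x/θ⌋:ℝ)+2)*(2*(k:ℝ)+1) = ((⌊x/θ⌋:ℝ)+2)*((k:ℝ)+1) := by
          calc θ*((⌊x/θ⌋:ℝ)+2)*(2*(k:ℝ)+1)
              = ((⌊x/θ⌋:ℝ)+2)*(θ*(2*(k:ℝ)+1)) := by ring
            _ = ((⌊x/θ⌋:ℝ)+2)*((k:ℝ)+1) := by rw [hθeq]
        nlinarith [hintR]
      exact le_of_mul_le_mul_right hfin hk0
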